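/- Let D be a self-adjoint operator on H and a, b ∈ B(H) both weakly D-differentiable. Then ab is weakly D-differentiable and the Leibniz rule holds: wD(ab) = wD(a) b + a wD(b). -/

import Mathlib

open Complex Filter Topology MeasureTheory
open scoped Topology

local notation "⟪" x ", " y "⟫" => @inner ℂ _ _ x y

variable {H : Type*} [NormedAddCommGroup H] [InnerProductSpace ℂ H] [CompleteSpace H]

/-- `b` is the bounded operator implementing the commutator form
`(ξ, η) ↦ ⟨aξ, Dη⟩ − ⟨aDξ, η⟩` on `dom D × dom D`; i.e. `a` is weakly `D`-differentiable
with derivative `wD(a) = b`. -/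
def IsWeakDeriv (D : H →ₗ.[ℂ] H) (a b : H →L[ℂ] H) : Prop :=
  ∀ ξ η : D.domain, ⟪b (ξ : H), (η : H)⟫ = ⟪a (ξ : H), D η⟫ - ⟪a (D ξ), (η : H)⟫

/-- `conjAd U t a = U t ∘ a ∘ U (−t)`, i.e. `α_t(a) = e^{itD} a e^{-itD}`. -/
noncomputable def conjAd (U : ℝ → H →L[ℂ] H) (t : ℝ) (a : H →L[ℂ] H) : H →L[ℂ] H :=
  (U t).comp (a.comp (U (-t)))

/-- `U` is the strongly continuous one-parameter unitary group `t ↦ e^{itD}`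
generated by the self-adjoint operator `D` (Stone's theorem characterization). -/
structure IsStoneGroupOf (D : H →ₗ.[ℂ] H) (U : ℝ → H →L[ℂ] H) : Prop where
  map_zero : U 0 = 1
  map_add : ∀ s t : ℝ, U (s + t) = (U s).comp (U t)
  isometry : ∀ (t : ℝ) (ξ : H), ‖U t ξ‖ = ‖ξ‖
  hasDerivAt : ∀ ξ : D.domain, HasDerivAt (fun t : ℝ => U t (ξ : H)) (Complex.I • D ξ) 0
  mem_domain : ∀ ξ v : H, HasDerivAt (fun t : ℝ => U t ξ) v 0 → ξ ∈ D.domain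

/-- If `b` is weakly `D`-differentiable with derivative `b'` and `D` is self-adjoint, then
`b` maps `dom D` into `dom D`. -/
theorem mem_domain_of_isWeakDeriv
    (D : H →ₗ.[ℂ] H) (hD : IsSelfAdjoint D)
    (b b' : H →L[ℂ] H) (hwb : IsWeakDeriv D b b') (ξ : D.domain) :
    b (ξ : H) ∈ D.domain := by
  have hD' : LinearPMap.adjoint D = D := hD
  obtain ⟨hdom, -⟩ := LinearPMap.ext_iff.mp hD'
  refine hdom.le (LinearPMap.mem_adjoint_domain_of_exists _ ⟨b' (ξ : H) + b (D ξ), fun x => ?_⟩)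
  rw [inner_add_left, hwb ξ x]
  ring

/-- If `b` is weakly `D`-differentiable with derivative `b'` and `D` is self-adjoint, then
`D (b ξ) = b' ξ + b (D ξ)` for `ξ ∈ dom D`. -/
theorem apply_eq_of_isWeakDeriv
    (D : H →ₗ.[ℂ] H) (hD : IsSelfAdjoint D)
    (b b' : H →L[ℂ] H) (hwb : IsWeakDeriv D b b') (ξ : D.domain)
    (hmem : b (ξ : H) ∈ D.domain) :
    D ⟨b (ξ : H), hmem⟩ = b' (ξ : H) + b (D ξ) := by
  have hD' : LinearPMap.adjoint D = D := hD
  have hdense : Dense (D.domain : Set H) := hD.dense_domain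
  obtain ⟨hdom, happ⟩ := LinearPMap.ext_iff.mp hD'
  have hadj := LinearPMap.adjoint_isFormalAdjoint hdense
  refine hdense.eq_of_inner_left ℂ fun v hv => ?_
  lift v to D.domain using hv
  have hmem' : b (ξ : H) ∈ (LinearPMap.adjoint D).domain := hdom.symm ▸ hmem
  have h1 := hadj ⟨b (ξ : H), hmem'⟩ v
  have h2 : LinearPMap.adjoint D ⟨b (ξ : H), hmem'⟩ = D ⟨b (ξ : H), hmem⟩ := happ (x := b (ξ : H)) (hf := hmem') (hg := hmem)
  rw [h2] at h1
  rw [h1, inner_add_left, hwb ξ v]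
  ring

/-- Leibniz rule: if `a` and `b` are weakly `D`-differentiable, so is `ab`,
with `wD(ab) = wD(a) b + a wD(b)`. -/
theorem isWeakDeriv_mul
    (D : H →ₗ.[ℂ] H) (hD : IsSelfAdjoint D)
    (U : ℝ → H →L[ℂ] H) (hU : IsStoneGroupOf D U)
    (a b a' b' : H →L[ℂ] H)
    (hwa : IsWeakDeriv D a a') (hwb : IsWeakDeriv D b b') :
    IsWeakDeriv D (a.comp b) (a'.comp b + a.comp b') := by
  intro ξ η
  have hmem : b (ξ : H) ∈ D.domain := mem_domain_of_isWeakDeriv D hD b b' hwb ξ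
  set ζ : D.domain := ⟨b (ξ : H), hmem⟩ with hζ
  have hDζ : D ζ = b' (ξ : H) + b (D ξ) := apply_eq_of_isWeakDeriv D hD b b' hwb ξ hmem
  have h1 : ⟪a' (b (ξ : H)), (η : H)⟫ = ⟪a (b (ξ : H)), D η⟫ - ⟪a (D ζ), (η : H)⟫ :=
    hwa ζ η
  simp only [ContinuousLinearMap.add_apply, ContinuousLinearMap.comp_apply]
  rw [inner_add_left, h1, hDζ, map_add, inner_add_left]
  ring
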